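/- Let M ≥ 2 be an integer, ν > 0, and let L_1, …, L_M be i.i.d. nonnegative random variables, each with an asymptotically exponential tail with decay rate μ > 0. Then lim_{n→∞} (log E[(1 − (1/M) Σ_{i=1}^{M} e^{−L_i (M−1)ν})^n]) / (log n) = −Mμ / ((M−1)ν). -/

import Mathlib

set_option maxHeartbeats 1000000

open MeasureTheory Filter ProbabilityTheory

lemma aux_tail_pos {Ω : Type*} {mΩ : MeasurableSpace Ω} (P : Measure Ω) [IsProbabilityMeasure P]
    {X : Ω → ℝ} {μ : ℝ} (hμ : 0 < μ)
    (ht : Tendsto (fun x : ℝ => Real.log (P {ω | X ω > x}).toReal / x) atTop (nhds (-μ))) :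
    ∀ x : ℝ, 0 < P {ω | X ω > x} := by
  intro x
  by_contra h
  push_neg at h
  have hx0 : P {ω | X ω > x} = 0 := le_antisymm h zero_le
  have hev : (fun y : ℝ => Real.log (P {ω | X ω > y}).toReal / y) =ᶠ[atTop]
      (fun _ => (0 : ℝ)) := by
    filter_upwards [eventually_ge_atTop x] with y hy
    have h0 : P {ω | X ω > y} = 0 := by
      refine measure_mono_null (fun ω hω => ?_) hx0
      exact lt_of_le_of_lt hy hω
    simp [h0]
  have h2 : Tendsto (fun _ : ℝ => (0 : ℝ)) atTop (nhds (-μ)) :=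
    (tendsto_congr' hev).mp ht
  have := tendsto_nhds_unique h2 tendsto_const_nhds
  linarith

lemma aux_tail_ge {Ω : Type*} {mΩ : MeasurableSpace Ω} (P : Measure Ω) [IsProbabilityMeasure P]
    {X : Ω → ℝ} {μ : ℝ} (hμ : 0 < μ)
    (ht : Tendsto (fun x : ℝ => Real.log (P {ω | X ω > x}).toReal / x) atTop (nhds (-μ))) :
    Tendsto (fun x : ℝ => Real.log (P {ω | x ≤ X ω}).toReal / x) atTop (nhds (-μ)) := by
  have hpos := aux_tail_pos P hμ ht
  have hposR : ∀ x : ℝ, 0 < (P {ω | X ω > x}).toReal :=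
    fun x => ENNReal.toReal_pos (hpos x).ne' (measure_ne_top _ _)
  have hposGe : ∀ x : ℝ, 0 < (P {ω | x ≤ X ω}).toReal := by
    intro x
    refine lt_of_lt_of_le (hposR x) ?_
    exact ENNReal.toReal_mono (measure_ne_top _ _) (measure_mono fun ω hω => by simp only [Set.mem_setOf_eq] at *; linarith)
  have hup : Tendsto (fun x : ℝ => Real.log (P {ω | X ω > x - 1}).toReal / (x - 1) * ((x - 1) / x))
      atTop (nhds (-μ)) := by
    have h1 : Tendsto (fun x : ℝ => Real.log (P {ω | X ω > x - 1}).toReal / (x - 1)) atTop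
        (nhds (-μ)) := ht.comp (tendsto_atTop_add_const_right _ (-1) tendsto_id)
    have h2 : Tendsto (fun x : ℝ => (x - 1) / x) atTop (nhds 1) := by
      have heq : (fun x : ℝ => (x - 1) / x) =ᶠ[atTop] fun x => 1 - x⁻¹ := by
        filter_upwards [eventually_gt_atTop 0] with x hx
        field_simp
      rw [tendsto_congr' heq]
      have h3 : Tendsto (fun x : ℝ => 1 - x⁻¹) atTop (nhds (1 - 0)) :=
        tendsto_const_nhds.sub tendsto_inv_atTop_zero
      simpa using h3
    simpa using h1.mul h2
  refine tendsto_of_tendsto_of_tendsto_of_le_of_le' ht hup ?_ ?_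
  · filter_upwards [eventually_gt_atTop 0] with x hx
    have hle : (P {ω | X ω > x}).toReal ≤ (P {ω | x ≤ X ω}).toReal :=
      ENNReal.toReal_mono (measure_ne_top _ _) (measure_mono fun ω hω => by simp only [Set.mem_setOf_eq] at *; linarith)
    gcongr
    exact hposR x
  · filter_upwards [eventually_ge_atTop 2] with x hx
    have hx0 : (0 : ℝ) < x := by linarith
    have hx1 : x - 1 ≠ 0 := by intro h; rw [sub_eq_zero] at h; linarith
    have hle : (P {ω | x ≤ X ω}).toReal ≤ (P {ω | X ω > x - 1}).toReal := by
      refine ENNReal.toReal_mono (measure_ne_top _ _) (measure_mono fun ω hω => ?_)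
      simp only [Set.mem_setOf_eq] at *
      linarith
    have heq : Real.log (P {ω | X ω > x - 1}).toReal / (x - 1) * ((x - 1) / x)
        = Real.log (P {ω | X ω > x - 1}).toReal / x := by
      field_simp
    rw [heq]
    gcongr
    exact hposGe x

theorem stmt4 {Ω : Type*} {mΩ : MeasurableSpace Ω} (P : Measure Ω) [IsProbabilityMeasure P]
    (M : ℕ) (hM : 2 ≤ M) (μ ν : ℝ) (hμ : 0 < μ) (hν : 0 < ν)
    (L : Fin M → Ω → ℝ) (hLm : ∀ i, Measurable (L i)) (hLnn : ∀ i ω, 0 ≤ L i ω)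
    (hindep : iIndepFun L P)
    (hident : ∀ i j, IdentDistrib (L i) (L j) P P)
    (htail : ∀ i, Tendsto (fun x : ℝ => Real.log (P {ω | L i ω > x}).toReal / x) atTop
      (nhds (-μ))) :
    Tendsto (fun n : ℕ =>
        Real.log (∫ ω,
            (1 - (1 / (M : ℝ)) * ∑ i, Real.exp (-(L i ω * ((M : ℝ) - 1) * ν))) ^ n ∂P)
          / Real.log n) atTop
      (nhds (-((M : ℝ) * μ / (((M : ℝ) - 1) * ν)))) := by
  have hM2 : (2 : ℝ) ≤ (M : ℝ) := by exact_mod_cast hM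
  have hMpos : (0 : ℝ) < (M : ℝ) := by linarith
  set c : ℝ := ((M : ℝ) - 1) * ν with hc_def
  have hc : 0 < c := by rw [hc_def]; nlinarith
  set α : ℝ := (M : ℝ) * μ / c with hα_def
  have hα : 0 < α := div_pos (mul_pos hMpos hμ) hc
  set q : Fin M → ℝ → ℝ := fun i x => (P {ω | x ≤ L i ω}).toReal with hq_def
  have hqpos : ∀ (i : Fin M) (x : ℝ), 0 < q i x := by
    intro i x
    have h1 := aux_tail_pos P hμ (htail i) x
    have h2 : P {ω | L i ω > x} ≤ P {ω | x ≤ L i ω} :=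
      measure_mono fun ω hω => by simp only [Set.mem_setOf_eq] at *; linarith
    exact ENNReal.toReal_pos (lt_of_lt_of_le h1 h2).ne' (measure_ne_top _ _)
  have hqt : ∀ i, Tendsto (fun x : ℝ => Real.log (q i x) / x) atTop (nhds (-μ)) :=
    fun i => aux_tail_ge P hμ (htail i)
  set Z : Ω → ℝ := fun ω => (1 / (M : ℝ)) * ∑ i, Real.exp (-(L i ω * ((M : ℝ) - 1) * ν))
    with hZ_def
  have hZm : Measurable Z := by
    apply Measurable.const_mul
    exact Finset.measurable_sum _ fun i _ =>
      (((hLm i).mul_const _).mul_const _).neg.exp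
  have hZpos : ∀ ω, 0 < Z ω := by
    intro ω
    apply mul_pos (by positivity)
    refine Finset.sum_pos (fun i _ => Real.exp_pos _) ?_
    have : Nonempty (Fin M) := ⟨⟨0, by omega⟩⟩
    exact Finset.univ_nonempty
  have hZle1 : ∀ ω, Z ω ≤ 1 := by
    intro ω
    have hsum : ∑ i, Real.exp (-(L i ω * ((M : ℝ) - 1) * ν)) ≤ (M : ℝ) := by
      calc ∑ i, Real.exp (-(L i ω * ((M : ℝ) - 1) * ν))
          ≤ ∑ _i : Fin M, (1 : ℝ) := by
            refine Finset.sum_le_sum fun i _ => ?_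
            rw [Real.exp_le_one_iff]
            have := hLnn i ω
            nlinarith
        _ = (M : ℝ) := by simp
    calc Z ω ≤ (1 / (M : ℝ)) * (M : ℝ) := by
          rw [hZ_def]
          exact mul_le_mul_of_nonneg_left hsum (by positivity)
      _ = 1 := by field_simp
  have hiff : ∀ (i : Fin M) (ω : Ω) (s : ℝ), 0 < s →
      (Real.exp (-(L i ω * ((M : ℝ) - 1) * ν)) ≤ s ↔ -Real.log s / c ≤ L i ω) := by
    intro i ω s hs
    rw [← Real.le_log_iff_exp_le hs, div_le_iff₀ hc, hc_def]
    constructor <;> intro h <;> nlinarith [mul_assoc (L i ω) ((M : ℝ) - 1) ν]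
  have hprod : ∀ x : ℝ, P (⋂ i, {ω | x ≤ L i ω}) = ∏ i, P {ω | x ≤ L i ω} := by
    intro x
    have h := hindep.measure_inter_preimage_eq_mul (S := Finset.univ)
      (sets := fun _ => Set.Ici x) (fun i _ => measurableSet_Ici)
    simpa [Set.preimage, Set.Ici] using h
  set F : ℝ → ℝ := fun t => (P {ω | Z ω ≤ t}).toReal with hF_def
  have hFlow : ∀ t : ℝ, 0 < t → ∏ i, q i (-Real.log t / c) ≤ F t := by
    intro t ht
    have hsub : (⋂ i, {ω | -Real.log t / c ≤ L i ω}) ⊆ {ω | Z ω ≤ t} := by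
      intro ω hω
      simp only [Set.mem_iInter, Set.mem_setOf_eq] at hω ⊢
      have hterm : ∀ i : Fin M, Real.exp (-(L i ω * ((M : ℝ) - 1) * ν)) ≤ t :=
        fun i => (hiff i ω t ht).2 (hω i)
      have hsum : ∑ i, Real.exp (-(L i ω * ((M : ℝ) - 1) * ν)) ≤ (M : ℝ) * t := by
        calc ∑ i, Real.exp (-(L i ω * ((M : ℝ) - 1) * ν)) ≤ ∑ _i : Fin M, t :=
              Finset.sum_le_sum fun i _ => hterm i
          _ = (M : ℝ) * t := by simp [mul_comm]
      calc Z ω ≤ (1 / (M : ℝ)) * ((M : ℝ) * t) :=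
            mul_le_mul_of_nonneg_left hsum (by positivity)
        _ = t := by field_simp
    calc ∏ i, q i (-Real.log t / c)
        = (∏ i, P {ω | -Real.log t / c ≤ L i ω}).toReal := by
          rw [ENNReal.toReal_prod]
      _ = (P (⋂ i, {ω | -Real.log t / c ≤ L i ω})).toReal := by rw [hprod]
      _ ≤ F t := ENNReal.toReal_mono (measure_ne_top _ _) (measure_mono hsub)
  have hFup : ∀ t : ℝ, 0 < t → F t ≤ ∏ i, q i (-Real.log ((M : ℝ) * t) / c) := by
    intro t ht
    have hMt : 0 < (M : ℝ) * t := by positivity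
    have hsub : {ω | Z ω ≤ t} ⊆ ⋂ i, {ω | -Real.log ((M : ℝ) * t) / c ≤ L i ω} := by
      intro ω hω
      simp only [Set.mem_setOf_eq] at hω
      simp only [Set.mem_iInter, Set.mem_setOf_eq]
      intro i
      refine (hiff i ω ((M : ℝ) * t) hMt).1 ?_
      have hle : Real.exp (-(L i ω * ((M : ℝ) - 1) * ν))
          ≤ ∑ j, Real.exp (-(L j ω * ((M : ℝ) - 1) * ν)) :=
        Finset.single_le_sum (f := fun j => Real.exp (-(L j ω * ((M : ℝ) - 1) * ν)))
          (fun j _ => (Real.exp_pos _).le) (Finset.mem_univ i)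
      have hsum : ∑ j, Real.exp (-(L j ω * ((M : ℝ) - 1) * ν)) = (M : ℝ) * Z ω := by
        rw [hZ_def]; field_simp; exact Finset.sum_congr rfl fun x _ => by ring_nf
      rw [hsum] at hle
      calc Real.exp (-(L i ω * ((M : ℝ) - 1) * ν)) ≤ (M : ℝ) * Z ω := hle
        _ ≤ (M : ℝ) * t := by nlinarith
    calc F t ≤ (P (⋂ i, {ω | -Real.log ((M : ℝ) * t) / c ≤ L i ω})).toReal :=
          ENNReal.toReal_mono (measure_ne_top _ _) (measure_mono hsub)
      _ = ∏ i, q i (-Real.log ((M : ℝ) * t) / c) := by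
          rw [hprod, ENNReal.toReal_prod]
  have hFpos : ∀ t : ℝ, 0 < t → 0 < F t := by
    intro t ht
    exact lt_of_lt_of_le (Finset.prod_pos fun i _ => hqpos i _) (hFlow t ht)
  -- the key limit for F
  have hE : Tendsto (fun t : ℝ => Real.log (F t) / Real.log t)
      (nhdsWithin 0 (Set.Ioi 0)) (nhds α) := by
    have hu : Tendsto (fun t : ℝ => -Real.log t / c) (nhdsWithin 0 (Set.Ioi 0)) atTop :=
      Tendsto.atTop_div_const hc
        (tendsto_neg_atBot_atTop.comp Real.tendsto_log_nhdsGT_zero)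
    have hmul : Tendsto (fun t : ℝ => (M : ℝ) * t) (nhdsWithin 0 (Set.Ioi 0))
        (nhdsWithin 0 (Set.Ioi 0)) := by
      rw [tendsto_nhdsWithin_iff]
      constructor
      · have hcont : Continuous fun t : ℝ => (M:ℝ) * t := continuous_const.mul continuous_id
        have h := hcont.tendsto 0
        rw [mul_zero] at h
        exact h.mono_left nhdsWithin_le_nhds
      · filter_upwards [self_mem_nhdsWithin] with t ht
        exact Set.mem_Ioi.mpr (mul_pos hMpos ht)
    have hv : Tendsto (fun t : ℝ => -Real.log ((M : ℝ) * t) / c)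
        (nhdsWithin 0 (Set.Ioi 0)) atTop := hu.comp hmul
    have hulog : Tendsto (fun t : ℝ => (-Real.log t / c) / Real.log t)
        (nhdsWithin 0 (Set.Ioi 0)) (nhds (-(1/c))) := by
      have : Tendsto (fun _ : ℝ => -(1/c)) (nhdsWithin 0 (Set.Ioi 0)) (nhds (-(1/c))) :=
        tendsto_const_nhds
      refine this.congr' ?_
      filter_upwards [Ioo_mem_nhdsGT_of_mem
        (by norm_num : (0:ℝ) ∈ Set.Ico (0:ℝ) 1)] with t ht
      have hlt : Real.log t ≠ 0 := (Real.log_neg ht.1 ht.2).ne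
      field_simp
    have hloginv : Tendsto (fun t : ℝ => Real.log (M : ℝ) / (c * Real.log t))
        (nhdsWithin 0 (Set.Ioi 0)) (nhds 0) := by
      have hb : Tendsto (fun t : ℝ => -(c * Real.log t)) (nhdsWithin 0 (Set.Ioi 0)) atTop :=
        tendsto_neg_atBot_atTop.comp
          (Real.tendsto_log_nhdsGT_zero.const_mul_atBot hc)
      have h1 : Tendsto (fun t : ℝ => Real.log (M : ℝ) / -(c * Real.log t))
          (nhdsWithin 0 (Set.Ioi 0)) (nhds 0) := tendsto_const_nhds.div_atTop hb
      have h2 := h1.neg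
      rw [neg_zero] at h2
      refine h2.congr fun t => ?_
      rw [div_neg, neg_neg]
    have hvlog : Tendsto (fun t : ℝ => (-Real.log ((M : ℝ) * t) / c) / Real.log t)
        (nhdsWithin 0 (Set.Ioi 0)) (nhds (-(1/c))) := by
      have h1 : Tendsto (fun t : ℝ => -(1/c) - Real.log (M : ℝ) / (c * Real.log t))
          (nhdsWithin 0 (Set.Ioi 0)) (nhds (-(1/c) - 0)) :=
        tendsto_const_nhds.sub hloginv
      rw [sub_zero] at h1
      refine h1.congr' ?_
      filter_upwards [Ioo_mem_nhdsGT_of_mem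
        (by norm_num : (0:ℝ) ∈ Set.Ico (0:ℝ) 1)] with t ht
      have hlt : Real.log t ≠ 0 := (Real.log_neg ht.1 ht.2).ne
      rw [Real.log_mul (by positivity) ht.1.ne']
      field_simp
      ring
    have hval : (∑ _i : Fin M, (-μ) * (-(1/c))) = α := by
      rw [Finset.sum_const, Finset.card_univ, Fintype.card_fin, nsmul_eq_mul, hα_def]
      field_simp
    have hS1 : Tendsto (fun t : ℝ => ∑ i, Real.log (q i (-Real.log t / c)) / Real.log t)
        (nhdsWithin 0 (Set.Ioi 0)) (nhds α) := by
      have hterm : ∀ i : Fin M, Tendsto (fun t : ℝ =>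
          Real.log (q i (-Real.log t / c)) / (-Real.log t / c) * ((-Real.log t / c) / Real.log t))
          (nhdsWithin 0 (Set.Ioi 0)) (nhds ((-μ) * (-(1/c)))) :=
        fun i => (Tendsto.comp (hqt i) hu).mul hulog
      have hsum := tendsto_finset_sum Finset.univ (fun i (_ : i ∈ Finset.univ) => hterm i)
      rw [hval] at hsum
      refine hsum.congr' ?_
      filter_upwards [Ioo_mem_nhdsGT_of_mem
        (by norm_num : (0:ℝ) ∈ Set.Ico (0:ℝ) 1)] with t ht
      refine Finset.sum_congr rfl fun i _ => ?_
      have hlt : Real.log t ≠ 0 := (Real.log_neg ht.1 ht.2).ne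
      have hu0 : -Real.log t / c ≠ 0 := ne_of_gt (div_pos (by linarith [Real.log_neg ht.1 ht.2]) hc)
      rw [div_mul_div_comm,
        mul_comm (Real.log (q i (-Real.log t / c))) (-Real.log t / c),
        mul_div_mul_left _ _ hu0]
    have hS2 : Tendsto
        (fun t : ℝ => ∑ i, Real.log (q i (-Real.log ((M : ℝ) * t) / c)) / Real.log t)
        (nhdsWithin 0 (Set.Ioi 0)) (nhds α) := by
      have hterm : ∀ i : Fin M, Tendsto (fun t : ℝ =>
          Real.log (q i (-Real.log ((M : ℝ) * t) / c)) / (-Real.log ((M : ℝ) * t) / c)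
            * ((-Real.log ((M : ℝ) * t) / c) / Real.log t))
          (nhdsWithin 0 (Set.Ioi 0)) (nhds ((-μ) * (-(1/c)))) :=
        fun i => (Tendsto.comp (hqt i) hv).mul hvlog
      have hsum := tendsto_finset_sum Finset.univ (fun i (_ : i ∈ Finset.univ) => hterm i)
      rw [hval] at hsum
      refine hsum.congr' ?_
      filter_upwards [Ioo_mem_nhdsGT_of_mem
        (Set.mem_Ico.mpr ⟨le_refl 0, by positivity⟩ : (0:ℝ) ∈ Set.Ico (0:ℝ) (1/(2*(M:ℝ))))] with t ht
      refine Finset.sum_congr rfl fun i _ => ?_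
      have ht1 : t < 1 := lt_of_lt_of_le ht.2 (by rw [div_le_one (by positivity)]; nlinarith)
      have hlt : Real.log t ≠ 0 := (Real.log_neg ht.1 ht1).ne
      have hMt1 : (M : ℝ) * t < 1 := by
        have := ht.2
        rw [lt_div_iff₀ (by positivity)] at this
        nlinarith
      have hv0 : -Real.log ((M : ℝ) * t) / c ≠ 0 :=
        ne_of_gt (div_pos (by linarith [Real.log_neg (mul_pos hMpos ht.1) hMt1]) hc)
      rw [div_mul_div_comm,
        mul_comm (Real.log (q i (-Real.log ((M : ℝ) * t) / c))) (-Real.log ((M : ℝ) * t) / c),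
        mul_div_mul_left _ _ hv0]
    refine tendsto_of_tendsto_of_tendsto_of_le_of_le' hS2 hS1 ?_ ?_
    · filter_upwards [Ioo_mem_nhdsGT_of_mem
        (Set.mem_Ico.mpr ⟨le_refl 0, by positivity⟩ : (0:ℝ) ∈ Set.Ico (0:ℝ) (1/(2*(M:ℝ))))] with t ht
      have ht1 : t < 1 := lt_of_lt_of_le ht.2 (by rw [div_le_one (by positivity)]; nlinarith)
      have hlt : Real.log t < 0 := Real.log_neg ht.1 ht1
      have h1 : Real.log (F t) ≤ ∑ i, Real.log (q i (-Real.log ((M : ℝ) * t) / c)) := by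
        rw [← Real.log_prod (fun i _ => (hqpos i _).ne')]
        exact Real.log_le_log (hFpos t ht.1) (hFup t ht.1)
      calc ∑ i, Real.log (q i (-Real.log ((M : ℝ) * t) / c)) / Real.log t
          = (∑ i, Real.log (q i (-Real.log ((M : ℝ) * t) / c))) / Real.log t :=
            (Finset.sum_div _ _ _).symm
        _ ≤ Real.log (F t) / Real.log t := div_le_div_of_nonpos_of_le hlt.le h1
    · filter_upwards [Ioo_mem_nhdsGT_of_mem
        (by norm_num : (0:ℝ) ∈ Set.Ico (0:ℝ) 1)] with t ht
      have hlt : Real.log t < 0 := Real.log_neg ht.1 ht.2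
      have h1 : ∑ i, Real.log (q i (-Real.log t / c)) ≤ Real.log (F t) := by
        rw [← Real.log_prod (fun i _ => (hqpos i _).ne')]
        exact Real.log_le_log (Finset.prod_pos fun i _ => hqpos i _) (hFlow t ht.1)
      calc Real.log (F t) / Real.log t
          ≤ (∑ i, Real.log (q i (-Real.log t / c))) / Real.log t :=
            div_le_div_of_nonpos_of_le hlt.le h1
        _ = ∑ i, Real.log (q i (-Real.log t / c)) / Real.log t := Finset.sum_div _ _ _
  -- integral facts
  have hint : ∀ n : ℕ, Integrable (fun ω => (1 - Z ω) ^ n) P := by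
    intro n
    refine Integrable.mono' (integrable_const 1)
      ((measurable_const.sub hZm).pow_const n).aestronglyMeasurable
      (Filter.Eventually.of_forall fun ω => ?_)
    have h0 : (0 : ℝ) ≤ 1 - Z ω := by linarith [hZle1 ω]
    have h1 : 1 - Z ω ≤ 1 := by linarith [hZpos ω]
    rw [Real.norm_eq_abs, abs_of_nonneg (pow_nonneg h0 n)]
    exact pow_le_one₀ h0 h1
  set I : ℕ → ℝ := fun n => ∫ ω, (1 - Z ω) ^ n ∂P with hI_def
  have hAmeas : ∀ t : ℝ, MeasurableSet {ω | Z ω ≤ t} := fun t => hZm measurableSet_Iic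
  have hIlow : ∀ (n : ℕ) (t : ℝ), 0 < t → t < 1 → (1 - t) ^ n * F t ≤ I n := by
    intro n t ht ht1
    have hind : Integrable
        (Set.indicator {ω | Z ω ≤ t} (fun _ => (1 - t) ^ n) : Ω → ℝ) P :=
      (integrable_const _).indicator (hAmeas t)
    have hmono : ∀ ω, Set.indicator {ω | Z ω ≤ t} (fun _ => (1 - t) ^ n) ω
        ≤ (1 - Z ω) ^ n := by
      intro ω
      by_cases hω : ω ∈ {ω | Z ω ≤ t}
      · rw [Set.indicator_of_mem hω]
        simp only [Set.mem_setOf_eq] at hω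
        exact pow_le_pow_left₀ (by linarith) (by linarith) n
      · rw [Set.indicator_of_notMem hω]
        exact pow_nonneg (by linarith [hZle1 ω]) n
    have h := integral_mono hind (hint n) hmono
    rwa [integral_indicator_const _ (hAmeas t), smul_eq_mul, mul_comm] at h
  have hIup : ∀ (n : ℕ) (t : ℝ), 0 < t → t < 1 → I n ≤ F t + (1 - t) ^ n := by
    intro n t ht ht1
    have hmono : ∀ ω, (1 - Z ω) ^ n
        ≤ Set.indicator {ω | Z ω ≤ t} (fun _ => (1 : ℝ)) ω + (1 - t) ^ n := by
      intro ω
      by_cases hω : ω ∈ {ω | Z ω ≤ t}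
      · rw [Set.indicator_of_mem hω]
        have h0 : (0 : ℝ) ≤ 1 - Z ω := by linarith [hZle1 ω]
        have h1 : 1 - Z ω ≤ 1 := by linarith [hZpos ω]
        have h2 : (1 - Z ω) ^ n ≤ 1 := pow_le_one₀ h0 h1
        nlinarith [pow_nonneg (by linarith : (0:ℝ) ≤ 1 - t) n]
      · rw [Set.indicator_of_notMem hω]
        simp only [Set.mem_setOf_eq, not_le] at hω
        have h2 := pow_le_pow_left₀ (by linarith [hZle1 ω] : (0:ℝ) ≤ 1 - Z ω)
          (by linarith : 1 - Z ω ≤ 1 - t) n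
        linarith
    have hR : Integrable
        (fun ω => Set.indicator {ω | Z ω ≤ t} (fun _ => (1:ℝ)) ω + (1 - t) ^ n) P :=
      ((integrable_const _).indicator (hAmeas t)).add (integrable_const _)
    have h2 := integral_mono (hint n) hR hmono
    rwa [integral_add ((integrable_const _).indicator (hAmeas t)) (integrable_const _),
      integral_indicator_const _ (hAmeas t), integral_const, probReal_univ,
      smul_eq_mul, mul_one, one_smul] at h2
  have hIpos : ∀ n : ℕ, 0 < I n := by
    intro n
    have h := hIlow n (1/2) (by norm_num) (by norm_num)
    have hF2 := hFpos (1/2) (by norm_num)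
    exact lt_of_lt_of_le (mul_pos (pow_pos (by norm_num) n) hF2) h
  -- main convergence
  have hgoal : Tendsto (fun n : ℕ => Real.log (I n) / Real.log (n : ℝ)) atTop (nhds (-α)) := by
    rw [tendsto_order]
    constructor
    · -- lower bound
      intro b hb
      have hnl : Tendsto (fun n : ℕ => (n:ℝ) * Real.log (1 - 1/(n:ℝ))) atTop (nhds (-1)) := by
        have h1 := Real.tendsto_one_add_div_pow_exp (-1)
        have h2 := (Real.continuousAt_log (Real.exp_pos (-1)).ne').tendsto.comp h1
        simp only [Function.comp_def, Real.log_exp] at h2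
        refine h2.congr' ?_
        filter_upwards [eventually_ge_atTop 2] with n hn
        have hn2 : (2:ℝ) ≤ (n:ℝ) := by exact_mod_cast hn
        have hpos : 0 < 1 + (-1)/(n:ℝ) := by
          rw [neg_div]
          have : 1/(n:ℝ) ≤ 1/2 := by
            apply div_le_div_of_nonneg_left <;> linarith
          linarith
        rw [Real.log_pow]
        congr 2
        rw [neg_div]
        ring
      have hterm1 : Tendsto (fun n : ℕ => (n:ℝ) * Real.log (1 - 1/(n:ℝ)) / Real.log (n:ℝ))
          atTop (nhds 0) :=
        hnl.div_atTop (Real.tendsto_log_atTop.comp tendsto_natCast_atTop_atTop)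
      have hseq : Tendsto (fun n : ℕ => 1/(n:ℝ)) atTop (nhdsWithin 0 (Set.Ioi 0)) := by
        rw [tendsto_nhdsWithin_iff]
        refine ⟨tendsto_one_div_atTop_nhds_zero_nat, ?_⟩
        filter_upwards [eventually_ge_atTop 1] with n hn
        have : (0:ℝ) < (n:ℝ) := by exact_mod_cast Nat.lt_of_lt_of_le Nat.zero_lt_one hn
        exact Set.mem_Ioi.mpr (by positivity)
      have hr1 := hE.comp hseq
      have hterm2 : Tendsto (fun n : ℕ => Real.log (F (1/(n:ℝ))) / Real.log (n:ℝ))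
          atTop (nhds (-α)) := by
        have h3 := hr1.mul_const (-1 : ℝ)
        have hval : α * (-1 : ℝ) = -α := by ring
        rw [hval] at h3
        refine h3.congr' ?_
        filter_upwards [eventually_ge_atTop 2] with n hn
        have hn1 : (1:ℝ) < (n:ℝ) := by
          have : (2:ℝ) ≤ (n:ℝ) := by exact_mod_cast hn
          linarith
        have hlogn : Real.log (n:ℝ) ≠ 0 := (Real.log_pos hn1).ne'
        show Real.log (F (1/(n:ℝ))) / Real.log (1/(n:ℝ)) * (-1)
            = Real.log (F (1/(n:ℝ))) / Real.log (n:ℝ)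
        rw [one_div, Real.log_inv, div_neg]
        ring
      have hlowseq := hterm1.add hterm2
      rw [zero_add] at hlowseq
      have hev1 := (tendsto_order.1 hlowseq).1 b hb
      have hev2 : ∀ᶠ n : ℕ in atTop,
          (n:ℝ) * Real.log (1 - 1/(n:ℝ)) / Real.log (n:ℝ)
            + Real.log (F (1/(n:ℝ))) / Real.log (n:ℝ)
          ≤ Real.log (I n) / Real.log (n:ℝ) := by
        filter_upwards [eventually_ge_atTop 2] with n hn
        have hn2 : (2:ℝ) ≤ (n:ℝ) := by exact_mod_cast hn
        have hn1 : (1:ℝ) < (n:ℝ) := by linarith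
        have ht0 : 0 < 1/(n:ℝ) := by positivity
        have ht1 : 1/(n:ℝ) < 1 := by rw [div_lt_one (by linarith)]; linarith
        have hIl := hIlow n (1/(n:ℝ)) ht0 ht1
        have hppos : (0:ℝ) < (1 - 1/(n:ℝ))^n := pow_pos (by linarith) n
        have hFp := hFpos (1/(n:ℝ)) ht0
        have hlog := Real.log_le_log (mul_pos hppos hFp) hIl
        rw [Real.log_mul hppos.ne' hFp.ne', Real.log_pow] at hlog
        have hlogn : 0 < Real.log (n:ℝ) := Real.log_pos hn1
        rw [← add_div]
        exact div_le_div_of_nonneg_right hlog hlogn.le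
      filter_upwards [hev1, hev2] with n h1 h2
      linarith
    · -- upper bound
      intro b hb
      have hε : 0 < b + α := by linarith
      set δ : ℝ := min (1/2 : ℝ) ((b + α) / (2 * (α + 1))) with hδ_def
      have hδ0 : 0 < δ := lt_min (by norm_num) (div_pos hε (by linarith))
      have hδh : δ ≤ 1/2 := min_le_left _ _
      have h1δ : 0 < 1 - δ := by linarith
      have hδα : -((1 - δ) * α) < b := by
        have h2 : δ * α < b + α := by
          have h5 := min_le_right (1/2 : ℝ) ((b + α) / (2 * (α + 1)))
          have h3 : δ * α ≤ (b + α) / (2*(α+1)) * α :=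
            mul_le_mul_of_nonneg_right h5 hα.le
          have h4 : (b + α) / (2*(α+1)) * α < b + α := by
            rw [div_mul_eq_mul_div, div_lt_iff₀ (by linarith)]
            nlinarith
          linarith
        nlinarith
      set T : ℕ → ℝ := fun n => (n:ℝ) ^ (-(1-δ)) with hT_def
      have hTpos : ∀ n : ℕ, 1 ≤ n → 0 < T n := by
        intro n hn
        have : (0:ℝ) < (n:ℝ) := by exact_mod_cast Nat.lt_of_lt_of_le Nat.zero_lt_one hn
        exact Real.rpow_pos_of_pos this _
      have hTlt1 : ∀ n : ℕ, 2 ≤ n → T n < 1 := by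
        intro n hn
        have : (1:ℝ) < (n:ℝ) := by
          have : (2:ℝ) ≤ (n:ℝ) := by exact_mod_cast hn
          linarith
        exact Real.rpow_lt_one_of_one_lt_of_neg this (by linarith)
      have hT0 : Tendsto T atTop (nhdsWithin 0 (Set.Ioi 0)) := by
        rw [tendsto_nhdsWithin_iff]
        refine ⟨(tendsto_rpow_neg_atTop (by linarith)).comp tendsto_natCast_atTop_atTop, ?_⟩
        filter_upwards [eventually_ge_atTop 1] with n hn
        exact Set.mem_Ioi.mpr (hTpos n hn)
      have hrt := hE.comp hT0
      have hup2 : Tendsto (fun n : ℕ => Real.log (F (T n)) / Real.log (T n) * (-(1-δ)))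
          atTop (nhds (α * (-(1-δ)))) := hrt.mul_const _
      have hup1 : Tendsto (fun n : ℕ => Real.log 2 / Real.log (n:ℝ)) atTop (nhds 0) :=
        tendsto_const_nhds.div_atTop (Real.tendsto_log_atTop.comp tendsto_natCast_atTop_atTop)
      have hupseq := hup1.add hup2
      have hlim_lt : 0 + α * (-(1-δ)) < b := by
        have hval : 0 + α * (-(1-δ)) = -((1-δ)*α) := by ring
        rw [hval]; exact hδα
      have hev1 := (tendsto_order.1 hupseq).2 b hlim_lt
      have hratio_lt : ∀ᶠ n : ℕ in atTop, Real.log (F (T n)) / Real.log (T n) < α + 1 :=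
        hrt.eventually_lt_const (by linarith)
      have hlittle : ∀ᶠ n : ℕ in atTop, (α+1) * Real.log (n:ℝ) ≤ (n:ℝ) ^ (δ:ℝ) := by
        have hlo := isLittleO_log_rpow_atTop hδ0
        have hc' : (0:ℝ) < 1/(α+1) := by positivity
        have hev := hlo.def hc'
        have hev' := (tendsto_natCast_atTop_atTop (R := ℝ)).eventually hev
        filter_upwards [hev', eventually_ge_atTop 1] with n h1 hn
        have hn1 : (1:ℝ) ≤ (n:ℝ) := by exact_mod_cast hn
        rw [Real.norm_eq_abs, Real.norm_eq_abs, abs_of_nonneg (Real.log_nonneg hn1),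
          abs_of_nonneg (Real.rpow_nonneg (by linarith) _)] at h1
        calc (α+1) * Real.log (n:ℝ) ≤ (α+1) * (1/(α+1) * (n:ℝ) ^ (δ:ℝ)) :=
              mul_le_mul_of_nonneg_left h1 (by linarith)
          _ = (n:ℝ) ^ (δ:ℝ) := by field_simp
      have hkey : ∀ᶠ n : ℕ in atTop, Real.log (I n) / Real.log (n:ℝ)
          ≤ Real.log 2 / Real.log (n:ℝ)
            + Real.log (F (T n)) / Real.log (T n) * (-(1-δ)) := by
        filter_upwards [hratio_lt, hlittle, eventually_ge_atTop 2] with n hrl hll hn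
        have hn2 : (2:ℝ) ≤ (n:ℝ) := by exact_mod_cast hn
        have hn1 : (1:ℝ) < (n:ℝ) := by linarith
        have hn0 : (0:ℝ) < (n:ℝ) := by linarith
        have hTp := hTpos n (by omega)
        have hT1 := hTlt1 n hn
        have hlogn_pos : 0 < Real.log (n:ℝ) := Real.log_pos hn1
        have hlogT : Real.log (T n) = -(1-δ) * Real.log (n:ℝ) := by
          rw [hT_def]; exact Real.log_rpow hn0 _
        have hlogT_neg : Real.log (T n) < 0 := by rw [hlogT]; nlinarith
        have hexp1 : (1 - T n)^n ≤ Real.exp (-((n:ℝ) * T n)) := by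
          have h1 : 1 - T n ≤ Real.exp (-(T n)) := by
            linarith [Real.add_one_le_exp (-(T n))]
          have h2 := pow_le_pow_left₀ (by linarith : (0:ℝ) ≤ 1 - T n) h1 n
          rwa [← Real.exp_nat_mul, mul_neg] at h2
        have hnT : (n:ℝ) * T n = (n:ℝ) ^ (δ:ℝ) := by
          rw [hT_def]
          have h1 : (n:ℝ) * (n:ℝ) ^ (-(1-δ)) = (n:ℝ) ^ (1:ℝ) * (n:ℝ) ^ (-(1-δ)) := by
            rw [Real.rpow_one]
          rw [h1, ← Real.rpow_add hn0]
          norm_num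
        have hFT_pos := hFpos _ hTp
        have hlogF_ge : -((n:ℝ) ^ (δ:ℝ)) ≤ Real.log (F (T n)) := by
          have h3 : (α+1) * Real.log (T n)
              ≤ Real.log (F (T n)) / Real.log (T n) * Real.log (T n) :=
            mul_le_mul_of_nonpos_right hrl.le hlogT_neg.le
          rw [div_mul_cancel₀ _ hlogT_neg.ne] at h3
          rw [hlogT] at h3
          have h5 : 0 ≤ (α+1) * (δ * Real.log (n:ℝ)) :=
            mul_nonneg (by linarith) (mul_nonneg hδ0.le hlogn_pos.le)
          nlinarith [hll, h5]
        have hFexp : Real.exp (-((n:ℝ) ^ (δ:ℝ))) ≤ F (T n) := by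
          calc Real.exp (-((n:ℝ) ^ (δ:ℝ))) ≤ Real.exp (Real.log (F (T n))) :=
                Real.exp_le_exp.mpr hlogF_ge
            _ = F (T n) := Real.exp_log hFT_pos
        have hpow_le : (1 - T n)^n ≤ F (T n) := by
          rw [hnT] at hexp1
          exact hexp1.trans hFexp
        have hIb := hIup n (T n) hTp hT1
        have hI2 : I n ≤ 2 * F (T n) := by linarith
        have hlogI : Real.log (I n) ≤ Real.log 2 + Real.log (F (T n)) := by
          calc Real.log (I n) ≤ Real.log (2 * F (T n)) := Real.log_le_log (hIpos n) hI2
            _ = Real.log 2 + Real.log (F (T n)) := Real.log_mul two_ne_zero hFT_pos.ne'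
        have hdiv : Real.log (I n) / Real.log (n:ℝ)
            ≤ (Real.log 2 + Real.log (F (T n))) / Real.log (n:ℝ) :=
          div_le_div_of_nonneg_right hlogI hlogn_pos.le
        have hlast : Real.log (F (T n)) / Real.log (n:ℝ)
            = Real.log (F (T n)) / Real.log (T n) * (-(1-δ)) := by
          have hk : -(1-δ) ≠ 0 := by intro h; rw [neg_eq_zero] at h; linarith
          rw [hlogT]
          symm
          rw [div_mul_eq_mul_div, mul_comm (Real.log (F (T n))) (-(1-δ)),
            mul_div_mul_left _ _ hk]
        rw [add_div] at hdiv
        rw [hlast] at hdiv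
        exact hdiv
      filter_upwards [hev1, hkey] with n h1 h2
      linarith
  exact hgoal
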